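/- If a and b are strongly normalizing expressions, the application a b has a key redex, and red_k(a b) is strongly normalizing, then a b is strongly normalizing. -/

import Mathlib

/-- Expressions of a pure type system: sorts, de Bruijn variables,
dependent products, annotated abstractions, applications. -/
inductive Expr : Type
  | sort : Nat → Expr
  | var : Nat → Expr
  | pi : Expr → Expr → Expr
  | lam : Expr → Expr → Expr
  | app : Expr → Expr → Expr
  deriving DecidableEq

/-- Lift free de Bruijn variables `≥ k` by `d`. -/
def Expr.lift (d k : Nat) : Expr → Expr
  | .sort s => .sort s
  | .var n => if n < k then .var n else .var (n + d)
  | .pi A B => .pi (Expr.lift d k A) (Expr.lift d (k+1) B)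
  | .lam A b => .lam (Expr.lift d k A) (Expr.lift d (k+1) b)
  | .app a b => .app (Expr.lift d k a) (Expr.lift d k b)

/-- Capture-avoiding substitution of `e` for variable `k`. -/
def Expr.subst (e : Expr) (k : Nat) : Expr → Expr
  | .sort s => .sort s
  | .var n => if n < k then .var n else if n = k then Expr.lift k 0 e else .var (n - 1)
  | .pi A B => .pi (Expr.subst e k A) (Expr.subst e (k+1) B)
  | .lam A b => .lam (Expr.subst e k A) (Expr.subst e (k+1) b)
  | .app a b => .app (Expr.subst e k a) (Expr.subst e k b)

/-- One-step beta reduction, with full congruence rules. -/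
inductive Step : Expr → Expr → Prop
  | beta (A b a : Expr) : Step (.app (.lam A b) a) (Expr.subst a 0 b)
  | pi1 {A A' B} : Step A A' → Step (.pi A B) (.pi A' B)
  | pi2 {A B B'} : Step B B' → Step (.pi A B) (.pi A B')
  | lam1 {A A' b} : Step A A' → Step (.lam A b) (.lam A' b)
  | lam2 {A b b'} : Step b b' → Step (.lam A b) (.lam A b')
  | app1 {a a' b} : Step a a' → Step (.app a b) (.app a' b)
  | app2 {a b b'} : Step b b' → Step (.app a b) (.app a b')

/-- Multi-step reduction. -/
def Steps : Expr → Expr → Prop := Relation.ReflTransGen Step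

/-- Strong normalization: no infinite reduction sequences from `a`. -/
def SN (a : Expr) : Prop := Acc (fun x y => Step y x) a

/-- Base expressions: a variable applied to a list of arguments. -/
inductive Base : Expr → Prop
  | var (n : Nat) : Base (.var n)
  | app {a} (b : Expr) : Base a → Base (.app a b)

/-- Key-redex contraction: `KeyRed a b` means `a` has a key redex and
contracting it yields `b` (i.e. `b = red_k a`). -/
inductive KeyRed : Expr → Expr → Prop
  | beta (A b a : Expr) : KeyRed (.app (.lam A b) a) (Expr.subst a 0 b)
  | app {a a'} (b : Expr) : KeyRed a a' → KeyRed (.app a b) (.app a' b)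

/-- `a` has a key redex. -/
def HasKey (a : Expr) : Prop := ∃ b, KeyRed a b

/-- Saturated sets of expressions. -/
def Saturated (S : Set Expr) : Prop :=
  (∀ a ∈ S, SN a) ∧
  (∀ a, Base a → SN a → a ∈ S) ∧
  (∀ a b, SN a → KeyRed a b → b ∈ S → a ∈ S)

/-- Function space on sets of expressions. -/
def Arrow (S₁ S₂ : Set Expr) : Set Expr := {a | ∀ b ∈ S₁, Expr.app a b ∈ S₂}

namespace Expr

theorem lift_var_lt {n k : Nat} (d : Nat) (h : n < k) : lift d k (.var n) = .var n := by
  simp [lift, h]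

theorem lift_var_ge {n k : Nat} (d : Nat) (h : k ≤ n) : lift d k (.var n) = .var (n + d) := by
  simp [lift, Nat.not_lt.mpr h]

theorem subst_var_lt {n k : Nat} (e : Expr) (h : n < k) : subst e k (.var n) = .var n := by
  simp [subst, h]

theorem subst_var_eq (e : Expr) (k : Nat) : subst e k (.var k) = lift k 0 e := by
  simp [subst]

theorem subst_var_gt {n k : Nat} (e : Expr) (h : k < n) : subst e k (.var n) = .var (n - 1) := by
  simp [subst, Nat.not_lt.mpr (Nat.le_of_lt h), Nat.ne_of_gt h]

theorem lift_lift_high (j d : Nat) (t : Expr) : ∀ m k, m ≤ k →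
    lift d (k + j) (lift j m t) = lift j m (lift d k t) := by
  induction t with intro m k h
  | sort s => rfl
  | var n =>
    by_cases h1 : n < m
    · rw [lift_var_lt j h1, lift_var_lt d (by omega), lift_var_lt d (by omega), lift_var_lt j h1]
    · rw [lift_var_ge j (by omega)]
      by_cases h2 : n < k
      · rw [lift_var_lt d (by omega), lift_var_lt d h2, lift_var_ge j (by omega)]
      · rw [lift_var_ge d (by omega), lift_var_ge d (by omega), lift_var_ge j (by omega)]
        congr 1; omega
  | pi A B ihA ihB =>
    simp only [lift, ihA m k h]
    rw [show k + j + 1 = (k+1) + j by omega, ihB (m+1) (k+1) (by omega)]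
  | lam A B ihA ihB =>
    simp only [lift, ihA m k h]
    rw [show k + j + 1 = (k+1) + j by omega, ihB (m+1) (k+1) (by omega)]
  | app A B ihA ihB => simp only [lift, ihA m k h, ihB m k h]

theorem lift_lift_same (j p : Nat) (t : Expr) : ∀ m m', m' ≤ m → m ≤ m' + p →
    lift j m (lift p m' t) = lift (p + j) m' t := by
  induction t with intro m m' h1 h2
  | sort s => rfl
  | var n =>
    by_cases h3 : n < m'
    · rw [lift_var_lt p h3, lift_var_lt j (by omega), lift_var_lt (p+j) h3]
    · rw [lift_var_ge p (by omega), lift_var_ge j (by omega), lift_var_ge (p+j) (by omega)]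
      congr 1; omega
  | pi A B ihA ihB =>
    simp only [lift, ihA m m' h1 h2, ihB (m+1) (m'+1) (by omega) (by omega)]
  | lam A B ihA ihB =>
    simp only [lift, ihA m m' h1 h2, ihB (m+1) (m'+1) (by omega) (by omega)]
  | app A B ihA ihB => simp only [lift, ihA m m' h1 h2, ihB m m' h1 h2]

theorem lift_subst (d k' : Nat) (a t : Expr) : ∀ j,
    lift d (k' + j) (subst a j t) = subst (lift d k' a) j (lift d (k' + j + 1) t) := by
  induction t with intro j
  | sort s => rfl
  | var n =>
    rcases Nat.lt_trichotomy n j with h | rfl | h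
    · rw [subst_var_lt a h, lift_var_lt d (by omega), lift_var_lt d (by omega),
        subst_var_lt _ h]
    · rw [subst_var_eq, lift_var_lt d (by omega), subst_var_eq]
      exact lift_lift_high n d a 0 k' (Nat.zero_le _)
    · rw [subst_var_gt a h]
      by_cases h2 : n < k' + j + 1
      · rw [lift_var_lt d (by omega), lift_var_lt d h2, subst_var_gt _ h]
      · rw [lift_var_ge d (by omega), lift_var_ge d (by omega), subst_var_gt _ (by omega)]
        congr 1; omega
  | pi A B ihA ihB =>
    simp only [lift, subst, ihA j]
    rw [show k' + j + 1 = k' + (j+1) by omega, ihB (j+1)]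
  | lam A B ihA ihB =>
    simp only [lift, subst, ihA j]
    rw [show k' + j + 1 = k' + (j+1) by omega, ihB (j+1)]
  | app A B ihA ihB => simp only [lift, subst, ihA j, ihB j]

theorem subst_lift_comm (e : Expr) (j : Nat) (t : Expr) : ∀ m k', m ≤ k' →
    subst e (k' + j) (lift j m t) = lift j m (subst e k' t) := by
  induction t with intro m k' h
  | sort s => rfl
  | var n =>
    rcases Nat.lt_trichotomy n k' with h1 | rfl | h1
    · by_cases h2 : n < m
      · rw [lift_var_lt j h2, subst_var_lt e (by omega), subst_var_lt e h1, lift_var_lt j h2]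
      · rw [lift_var_ge j (by omega), subst_var_lt e (by omega), subst_var_lt e h1,
          lift_var_ge j (by omega)]
    · rw [lift_var_ge j (by omega), subst_var_eq, subst_var_eq]
      exact (lift_lift_same j n e m 0 (Nat.zero_le _) (by omega)).symm
    · rw [lift_var_ge j (by omega), subst_var_gt e (by omega), subst_var_gt e h1,
        lift_var_ge j (by omega)]
      congr 1; omega
  | pi A B ihA ihB =>
    simp only [lift, subst, ihA m k' h]
    rw [show k' + j + 1 = (k'+1) + j by omega, ihB (m+1) (k'+1) (by omega)]
  | lam A B ihA ihB =>
    simp only [lift, subst, ihA m k' h]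
    rw [show k' + j + 1 = (k'+1) + j by omega, ihB (m+1) (k'+1) (by omega)]
  | app A B ihA ihB => simp only [lift, subst, ihA m k' h, ihB m k' h]

theorem subst_lift_cancel (x : Expr) (d : Nat) (e : Expr) : ∀ m j, m ≤ j → j ≤ m + d →
    subst x j (lift (d+1) m e) = lift d m e := by
  induction e with intro m j h1 h2
  | sort s => rfl
  | var n =>
    by_cases h3 : n < m
    · rw [lift_var_lt _ h3, subst_var_lt x (by omega), lift_var_lt d h3]
    · rw [lift_var_ge _ (by omega), subst_var_gt x (by omega), lift_var_ge d (by omega)]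
      try (simp only [var.injEq]; omega)
  | pi A B ihA ihB =>
    simp only [lift, subst, ihA m j h1 h2, ihB (m+1) (j+1) (by omega) (by omega)]
  | lam A B ihA ihB =>
    simp only [lift, subst, ihA m j h1 h2, ihB (m+1) (j+1) (by omega) (by omega)]
  | app A B ihA ihB => simp only [lift, subst, ihA m j h1 h2, ihB m j h1 h2]

theorem subst_subst (e a : Expr) (k' : Nat) (t : Expr) : ∀ j,
    subst e (k' + j) (subst a j t) = subst (subst e k' a) j (subst e (k' + j + 1) t) := by
  induction t with intro j
  | sort s => rfl
  | var n =>
    rcases Nat.lt_trichotomy n j with h | rfl | h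
    · rw [subst_var_lt a h, subst_var_lt e (by omega), subst_var_lt e (by omega),
        subst_var_lt _ h]
    · rw [subst_var_eq, subst_var_lt e (by omega), subst_var_eq]
      exact subst_lift_comm e n a 0 k' (Nat.zero_le _)
    · rw [subst_var_gt a h]
      rcases Nat.lt_trichotomy n (k' + j + 1) with h2 | rfl | h2
      · rw [subst_var_lt e (by omega), subst_var_lt e h2, subst_var_gt _ h]
      · rw [show k' + j + 1 - 1 = k' + j by omega, subst_var_eq, subst_var_eq]
        exact (subst_lift_cancel (subst e k' a) (k' + j) e 0 j (Nat.zero_le _) (by omega)).symm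
      · rw [subst_var_gt e (by omega), subst_var_gt e h2, subst_var_gt _ (by omega)]
        try (simp only [var.injEq]; omega)
  | pi A B ihA ihB =>
    simp only [subst, ihA j]
    rw [show k' + j + 1 = k' + (j+1) by omega, ihB (j+1)]
  | lam A B ihA ihB =>
    simp only [subst, ihA j]
    rw [show k' + j + 1 = k' + (j+1) by omega, ihB (j+1)]
  | app A B ihA ihB => simp only [subst, ihA j, ihB j]

end Expr

theorem Expr.lift_subst0 (d k : Nat) (a t : Expr) :
    Expr.lift d k (Expr.subst a 0 t) = Expr.subst (Expr.lift d k a) 0 (Expr.lift d (k+1) t) := by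
  simpa using Expr.lift_subst d k a t 0

theorem Expr.subst_subst0 (e a : Expr) (k : Nat) (t : Expr) :
    Expr.subst e k (Expr.subst a 0 t) = Expr.subst (Expr.subst e k a) 0 (Expr.subst e (k+1) t) := by
  simpa using Expr.subst_subst e a k t 0

theorem step_lift {t t' : Expr} (h : Step t t') : ∀ d k, Step (Expr.lift d k t) (Expr.lift d k t') := by
  induction h with intro d k
  | beta A b a =>
    simp only [Expr.lift]
    rw [Expr.lift_subst0]
    exact Step.beta _ _ _
  | pi1 _ ih => exact Step.pi1 (ih d k)
  | pi2 _ ih => exact Step.pi2 (ih d (k+1))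
  | lam1 _ ih => exact Step.lam1 (ih d k)
  | lam2 _ ih => exact Step.lam2 (ih d (k+1))
  | app1 _ ih => exact Step.app1 (ih d k)
  | app2 _ ih => exact Step.app2 (ih d k)

theorem step_subst {t t' : Expr} (h : Step t t') (e : Expr) : ∀ k, Step (Expr.subst e k t) (Expr.subst e k t') := by
  induction h with intro k
  | beta A b a =>
    simp only [Expr.subst]
    rw [Expr.subst_subst0]
    exact Step.beta _ _ _
  | pi1 _ ih => exact Step.pi1 (ih k)
  | pi2 _ ih => exact Step.pi2 (ih (k+1))
  | lam1 _ ih => exact Step.lam1 (ih k)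
  | lam2 _ ih => exact Step.lam2 (ih (k+1))
  | app1 _ ih => exact Step.app1 (ih k)
  | app2 _ ih => exact Step.app2 (ih k)

theorem steps_congr {f : Expr → Expr} (hf : ∀ x y, Step x y → Step (f x) (f y))
    {a b : Expr} (h : Steps a b) : Steps (f a) (f b) :=
  Relation.ReflTransGen.lift f hf _ _ h

theorem steps_subst_arg {e e' : Expr} (h : Step e e') (t : Expr) : ∀ k,
    Steps (Expr.subst e k t) (Expr.subst e' k t) := by
  induction t with intro k
  | sort s => exact Relation.ReflTransGen.refl
  | var n =>
    rcases Nat.lt_trichotomy n k with h1 | rfl | h1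
    · rw [Expr.subst_var_lt e h1, Expr.subst_var_lt e' h1]
      exact Relation.ReflTransGen.refl
    · rw [Expr.subst_var_eq, Expr.subst_var_eq]
      exact Relation.ReflTransGen.single (step_lift h n 0)
    · rw [Expr.subst_var_gt e h1, Expr.subst_var_gt e' h1]
      exact Relation.ReflTransGen.refl
  | pi A B ihA ihB =>
    simp only [Expr.subst]
    exact Relation.ReflTransGen.trans
      (steps_congr (fun _ _ h => Step.pi1 h) (ihA k))
      (steps_congr (fun _ _ h => Step.pi2 h) (ihB (k+1)))
  | lam A B ihA ihB =>
    simp only [Expr.subst]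
    exact Relation.ReflTransGen.trans
      (steps_congr (fun _ _ h => Step.lam1 h) (ihA k))
      (steps_congr (fun _ _ h => Step.lam2 h) (ihB (k+1)))
  | app A B ihA ihB =>
    simp only [Expr.subst]
    exact Relation.ReflTransGen.trans
      (steps_congr (fun _ _ h => Step.app1 h) (ihA k))
      (steps_congr (fun _ _ h => Step.app2 h) (ihB k))

theorem keyred_step {a a₀ : Expr} (hk : KeyRed a a₀) : ∀ {a'}, Step a a' →
    a' = a₀ ∨ ∃ a'', KeyRed a' a'' ∧ Steps a₀ a'' := by
  induction hk with intro x hs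
  | beta A d s =>
    cases hs with
    | beta => exact Or.inl rfl
    | app1 h =>
      cases h with
      | lam1 h' => exact Or.inr ⟨_, KeyRed.beta _ d s, Relation.ReflTransGen.refl⟩
      | lam2 h' => exact Or.inr ⟨_, KeyRed.beta _ _ s, Relation.ReflTransGen.single (step_subst h' s 0)⟩
    | app2 h => exact Or.inr ⟨_, KeyRed.beta A d _, steps_subst_arg h d 0⟩
  | app b hk ih =>
    cases hs with
    | beta => nomatch hk
    | app1 h =>
      rcases ih h with rfl | ⟨a'', hk', hs'⟩
      · exact Or.inl rfl
      · exact Or.inr ⟨_, KeyRed.app b hk', steps_congr (fun _ _ h => Step.app1 h) hs'⟩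
    | app2 h => exact Or.inr ⟨_, KeyRed.app _ hk, Relation.ReflTransGen.single (Step.app2 h)⟩

theorem sn_of_step {a a' : Expr} (h : SN a) (s : Step a a') : SN a' := h.inv s

theorem sn_of_steps {a a' : Expr} (h : SN a) (s : Steps a a') : SN a' := by
  induction s with
  | refl => exact h
  | tail _ hstep ih => exact sn_of_step ih hstep

theorem app_SN_of_key_redex_aux : ∀ a, SN a → ∀ b, SN b →
    ∀ c, KeyRed (.app a b) c → SN c → SN (.app a b) := by
  intro a ha
  induction ha with
  | intro a _ iha =>
    intro b hb
    induction hb with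
    | intro b hb' ihb =>
      intro c hk hc
      constructor
      intro x hx
      cases hx with
      | beta A d =>
        cases hk with
        | beta => exact hc
        | app _ hk' => nomatch hk'
      | app1 h =>
        rcases keyred_step hk (Step.app1 h) with heq | ⟨c', hk', hs'⟩
        · exact heq ▸ hc
        · exact iha _ h b (Acc.intro b hb') c' hk' (sn_of_steps hc hs')
      | app2 h =>
        rcases keyred_step hk (Step.app2 h) with heq | ⟨c', hk', hs'⟩
        · exact heq ▸ hc
        · exact ihb _ h c' hk' (sn_of_steps hc hs')

/-- If `a, b ∈ SN`, `a b` has a key redex and `red_k (a b) ∈ SN`, then `a b ∈ SN`. -/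
theorem app_SN_of_key_redex {a b c : Expr}
    (ha : SN a) (hb : SN b) (hk : KeyRed (.app a b) c) (hc : SN c) :
    SN (.app a b) :=
  app_SN_of_key_redex_aux a ha b hb c hk hc
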